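/- Let X be an infinite-dimensional real Banach space. Then dens(X) ≤ 2^{biort(X)}, where the exponent is the supremum of cardinalities of biorthogonal systems in X × X*. -/

import Mathlib

open Cardinal Set Topology

universe u

noncomputable section

/-- The spread of a topological space: the supremum of cardinalities of discrete subspaces. -/
def spread (Z : Type u) [TopologicalSpace Z] : Cardinal.{u} :=
  ⨆ D : {D : Set Z // DiscreteTopology D}, #D.1

/-- The density of a topological space: the least cardinality of a dense subset. -/
def densityCard (Z : Type u) [TopologicalSpace Z] : Cardinal.{u} :=
  ⨅ D : {D : Set Z // Dense D}, #D.1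

/-- The hereditary density: the supremum of the densities of all subspaces. -/
def hdens (Z : Type u) [TopologicalSpace Z] : Cardinal.{u} :=
  ⨆ S : Set Z, densityCard S

/-- The Lindelöf degree: the least cardinal κ such that every open cover
has a subcover of cardinality at most κ. -/
def lindelofDeg (Z : Type u) [TopologicalSpace Z] : Cardinal.{u} :=
  sInf {κ | ∀ (ι : Type u) (U : ι → Set Z), (∀ i, IsOpen (U i)) → (⋃ i, U i) = Set.univ →
    ∃ t : Set ι, #t ≤ κ ∧ (⋃ i ∈ t, U i) = Set.univ}

/-- The hereditary Lindelöf degree: the supremum of the Lindelöf degrees of all subspaces. -/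
def hLindelof (Z : Type u) [TopologicalSpace Z] : Cardinal.{u} :=
  ⨆ S : Set Z, lindelofDeg S

/-- A biorthogonal system `(x_i, f_i)_{i ∈ I} ⊆ X × X*`. -/
def IsBiorthSys {X : Type u} [NormedAddCommGroup X] [NormedSpace ℝ X] {I : Type u}
    (x : I → X) (f : I → (X →L[ℝ] ℝ)) : Prop :=
  (∀ i, f i (x i) = 1) ∧ ∀ i j, i ≠ j → f i (x j) = 0

/-- `biort X`: the supremum of cardinalities of biorthogonal systems in `X × X*`. -/
def biort (X : Type u) [NormedAddCommGroup X] [NormedSpace ℝ X] : Cardinal.{u} :=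
  sSup {c | ∃ (I : Type u) (x : I → X) (f : I → (X →L[ℝ] ℝ)), IsBiorthSys x f ∧ c = #I}

section auxiliary
set_option linter.unusedSectionVars false
variable {X : Type u} [NormedAddCommGroup X] [NormedSpace ℝ X]

/-- Hahn-Banach: a functional vanishing on a closed subspace, equal to 1 at a point outside. -/
lemma exists_functional_aux (K : Submodule ℝ X) (hKc : IsClosed (K : Set X)) {x : X}
    (hx : x ∉ K) : ∃ f : X →L[ℝ] ℝ, f x = 1 ∧ ∀ y ∈ K, f y = 0 := by
  obtain ⟨f, u, hfx, hfK⟩ := geometric_hahn_banach_point_closed (K.convex) hKc hx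
  have hu : u < 0 := by simpa using hfK 0 K.zero_mem
  have hker : ∀ y ∈ K, f y = 0 := by
    intro y hy
    by_contra h0
    have h1 : f (((u - 1) / f y) • y) = u - 1 := by
      rw [map_smul, smul_eq_mul]; field_simp
    have h2 := hfK (((u - 1) / f y) • y) (K.smul_mem _ hy)
    rw [h1] at h2; linarith
  have hfx0 : f x ≠ 0 := by intro h; rw [h] at hfx; linarith
  refine ⟨(f x)⁻¹ • f, ?_, ?_⟩
  · simp [inv_mul_cancel₀ hfx0]
  · intro y hy; simp [hker y hy]

/-- Cardinality of a closure is at most `#s ^ ℵ₀`. -/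
lemma mk_closure_le_aux (s : Set X) : #(closure s) ≤ #s ^ ℵ₀ := by
  have F : ∀ y : closure s, ∃ g : ℕ → s, Filter.Tendsto (fun n => (g n : X)) Filter.atTop (nhds y.1) := by
    intro y
    obtain ⟨g, hgs, hgt⟩ := mem_closure_iff_seq_limit.mp y.2
    exact ⟨fun n => ⟨g n, hgs n⟩, hgt⟩
  choose G hG using F
  have hinj : Function.Injective G := by
    intro y z h
    have : Filter.Tendsto (fun n => ((G y n : X))) Filter.atTop (nhds z.1) := by
      rw [h]; exact hG z
    exact Subtype.ext (tendsto_nhds_unique (hG y) this)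
  calc #(closure s) ≤ #(ℕ → s) := Cardinal.mk_le_of_injective hinj
    _ = #s ^ ℵ₀ := by rw [Cardinal.mk_arrow, Cardinal.mk_nat, Cardinal.lift_aleph0, Cardinal.lift_id']


/-- a set-version of biorthogonality -/
def BiorthSet {X : Type u} [NormedAddCommGroup X] [NormedSpace ℝ X]
    (M : Set (X × (X →L[ℝ] ℝ))) : Prop :=
  (∀ p ∈ M, p.2 p.1 = 1) ∧ ∀ p ∈ M, ∀ q ∈ M, p ≠ q → p.2 q.1 = 0

omit [NormedAddCommGroup X] [NormedSpace ℝ X] in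
theorem main_aux (X : Type u) [NormedAddCommGroup X] [NormedSpace ℝ X]
    (hX : ¬ FiniteDimensional ℝ X) :
    #X ≤ 2 ^ biort X := by
  -- Zorn's lemma: a maximal biorthogonal set
  obtain ⟨M, hM, hMmax⟩ : ∃ M, BiorthSet M ∧ ∀ M', BiorthSet M' → M ⊆ M' → M' = M := by
    have hchain : ∀ c ⊆ {N : Set (X × (X →L[ℝ] ℝ)) | BiorthSet N}, IsChain (· ⊆ ·) c →
        ∃ ub ∈ {N : Set (X × (X →L[ℝ] ℝ)) | BiorthSet N}, ∀ s ∈ c, s ⊆ ub := by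
      intro c hcS hc
      refine ⟨⋃₀ c, ⟨?_, ?_⟩, fun s hs => subset_sUnion_of_mem hs⟩
      · rintro p ⟨t, htc, hpt⟩
        exact (hcS htc).1 p hpt
      · rintro p ⟨t, htc, hpt⟩ q ⟨t', ht'c, hqt'⟩ hpq
        rcases hc.total htc ht'c with h | h
        · exact (hcS ht'c).2 p (h hpt) q hqt' hpq
        · exact (hcS htc).2 p hpt q (h hqt') hpq
    obtain ⟨M, hM⟩ := zorn_subset {N : Set (X × (X →L[ℝ] ℝ)) | BiorthSet N} hchain
    exact ⟨M, hM.prop, fun M' h1 h2 => hM.eq_of_ge h1 h2⟩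
  set A : Set X := Prod.fst '' M with hA
  set K : Submodule ℝ X := (Submodule.span ℝ A).topologicalClosure with hK
  have hKc : IsClosed (K : Set X) := Submodule.isClosed_topologicalClosure _
  -- maximality: everything annihilated by all functionals of M lies in K
  have hsub : ∀ z : X, (∀ p ∈ M, p.2 z = 0) → z ∈ K := by
    intro z hz
    by_contra hzK
    obtain ⟨f, hfz, hfK⟩ := exists_functional_aux K hKc hzK
    have hzfM : (z, f) ∉ M := fun h => by simpa [hz _ h] using hM.1 _ h
    have hspan : ∀ p ∈ M, f p.1 = 0 := by
      intro p hp
      exact hfK _ (Submodule.le_topologicalClosure _ (Submodule.subset_span ⟨p, hp, rfl⟩))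
    have : BiorthSet (insert (z, f) M) := by
      constructor
      · rintro p (rfl | hp)
        · exact hfz
        · exact hM.1 p hp
      · rintro p (rfl | hp) q (rfl | hq) hpq
        · exact absurd rfl hpq
        · exact hspan q hq
        · exact hz p hp
        · exact hM.2 p hp q hq hpq
    have := hMmax _ this (subset_insert _ _)
    exact hzfM (this ▸ mem_insert _ _)
  -- M is infinite
  have hMinf : Infinite M := by
    rw [← not_finite_iff_infinite]
    intro hfin
    apply hX
    have hAfin : A.Finite := (toFinite M).image _
    have hKfin : FiniteDimensional ℝ K := by
      have hs : FiniteDimensional ℝ (Submodule.span ℝ A) := FiniteDimensional.span_of_finite ℝ hAfin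
      have hcl : IsClosed ((Submodule.span ℝ A : Submodule ℝ X) : Set X) :=
        Submodule.closed_of_finiteDimensional _
      rw [hK, hcl.submodule_topologicalClosure_eq]
      exact hs
    let Φ : X →ₗ[ℝ] (M → ℝ) := LinearMap.pi (fun p : M => (p.1.2 : X →ₗ[ℝ] ℝ))
    have hker : LinearMap.ker Φ ≤ K := by
      intro v hv
      refine hsub v fun p hp => ?_
      have := congrFun (LinearMap.mem_ker.mp hv) ⟨p, hp⟩
      exact this
    have h1 : FiniteDimensional ℝ (LinearMap.ker Φ) := Submodule.finiteDimensional_of_le hker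
    have h2 : FiniteDimensional ℝ (LinearMap.range Φ) := by
      have : Finite M := hfin
      infer_instance
    have hr : Module.rank ℝ X < ℵ₀ := by
      rw [← Φ.rank_range_add_rank_ker]
      exact Cardinal.add_lt_aleph0 (Module.rank_lt_aleph0 _ _) (Module.rank_lt_aleph0 _ _)
    exact Module.rank_lt_aleph0_iff.mp hr
  set κ : Cardinal.{u} := #M with hκ
  have hκinf : ℵ₀ ≤ κ := Cardinal.aleph0_le_mk M
  have hκbi : κ ≤ biort X := by
    have hbdd : BddAbove {c | ∃ (I : Type u) (x : I → X) (f : I → (X →L[ℝ] ℝ)),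
        IsBiorthSys x f ∧ c = #I} := by
      refine ⟨#X, fun c hc => ?_⟩
      obtain ⟨I, x, f, ⟨h1, h2⟩, rfl⟩ := hc
      have hxinj : Function.Injective x := by
        intro i j hij
        by_contra hne
        have h0 := h2 i j hne
        rw [← hij] at h0
        rw [h1 i] at h0
        exact one_ne_zero h0
      exact Cardinal.mk_le_of_injective hxinj
    refine le_csSup hbdd ?_
    refine ⟨M, fun p => p.1.1, fun p => p.1.2, ⟨fun p => hM.1 p.1 p.2,
      fun p q hpq => hM.2 p.1 p.2 q.1 q.2 (fun h => hpq (Subtype.ext h))⟩, rfl⟩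
  have hAcard : #A ≤ κ := Cardinal.mk_image_le
  have hMne : M.Nonempty := Set.nonempty_coe_sort.mp inferInstance
  have hANe : A.Nonempty := hMne.image _
  have hspan : #(Submodule.span ℝ A : Set X) ≤ 2 ^ κ := by
    haveI : Nonempty A := hANe.to_subtype
    have hrange : (Submodule.span ℝ A : Set X) =
        Set.range (Finsupp.linearCombination ℝ (fun a : A => (a : X))) := by
      rw [← LinearMap.coe_range, Finsupp.range_linearCombination, Subtype.range_coe]
    rw [hrange]
    calc #(Set.range (Finsupp.linearCombination ℝ (fun a : A => (a : X))))
        ≤ #(A →₀ ℝ) := Cardinal.mk_range_le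
      _ = max (Cardinal.lift.{0} #A) (Cardinal.lift.{u} #ℝ) :=
          Cardinal.mk_finsupp_lift_of_infinite' A ℝ
      _ ≤ 2 ^ κ := by
          rw [Cardinal.lift_uzero, Cardinal.mk_real, Cardinal.lift_continuum]
          refine max_le ((hAcard.trans (Cardinal.cantor κ).le)) ?_
          rw [← Cardinal.two_power_aleph0]
          exact Cardinal.power_le_power_left (by norm_num : (2:Cardinal.{u}) ≠ 0) hκinf
  have hKcard : #(K : Set X) ≤ 2 ^ κ := by
    rw [hK, Submodule.topologicalClosure_coe]
    calc #(closure (Submodule.span ℝ A : Set X)) ≤ #(Submodule.span ℝ A : Set X) ^ ℵ₀ :=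
        mk_closure_le_aux _
      _ ≤ (2 ^ κ) ^ ℵ₀ := Cardinal.power_le_power_right hspan
      _ = 2 ^ κ := by rw [← Cardinal.power_mul, Cardinal.mul_aleph0_eq hκinf]
  -- the injection
  have hXcard : #X ≤ 2 ^ κ := by
    classical
    set Ψ : X → (M → ℝ) := fun v p => p.1.2 v with hΨ
    set r : (M → ℝ) → X := fun w => if h : ∃ v, Ψ v = w then h.choose else 0 with hr
    have hrspec : ∀ v : X, Ψ (r (Ψ v)) = Ψ v := by
      intro v
      have hex : ∃ u, Ψ u = Ψ v := ⟨v, rfl⟩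
      rw [hr]
      simp only [dif_pos hex]
      exact hex.choose_spec
    have hmemK : ∀ v : X, v - r (Ψ v) ∈ K := by
      intro v
      refine hsub _ fun p hp => ?_
      have := congrFun (hrspec v) ⟨p, hp⟩
      simp only [hΨ] at this
      rw [map_sub, this, sub_self]
    set G : X → (M → ℝ) × K := fun v => (Ψ v, ⟨v - r (Ψ v), hmemK v⟩) with hG
    have hGinj : Function.Injective G := by
      intro v w hvw
      have h1 : Ψ v = Ψ w := congrArg Prod.fst hvw
      have h2 : v - r (Ψ v) = w - r (Ψ w) := congrArg (fun q => (q.2 : X)) hvw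
      rw [h1] at h2
      exact sub_left_inj.mp h2
    calc #X ≤ #((M → ℝ) × K) := Cardinal.mk_le_of_injective hGinj
      _ = #(M → ℝ) * #(K : Set X) := by rw [Cardinal.mk_prod, Cardinal.lift_id, Cardinal.lift_id]; rfl
      _ ≤ (2 ^ κ) * (2 ^ κ) := by
          refine mul_le_mul' ?_ hKcard
          rw [Cardinal.mk_arrow, Cardinal.mk_real, Cardinal.lift_continuum, Cardinal.lift_uzero,
            ← Cardinal.two_power_aleph0, ← Cardinal.power_mul, Cardinal.aleph0_mul_eq hκinf]
      _ = 2 ^ κ := by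
          rw [← Cardinal.power_add]
          congr 1
          exact Cardinal.add_eq_self (hκinf)
  exact hXcard.trans (Cardinal.power_le_power_left (by norm_num : (2:Cardinal.{u}) ≠ 0) hκbi)

end auxiliary

/-- For an infinite-dimensional real Banach space `X`,
`dens(X) ≤ 2 ^ biort(X)`. -/
theorem stmt1 (X : Type u) [NormedAddCommGroup X] [NormedSpace ℝ X] [CompleteSpace X]
    (hX : ¬ FiniteDimensional ℝ X) :
    densityCard X ≤ 2 ^ biort X := by
  have h1 : densityCard X ≤ #X := by
    have h : densityCard X ≤ #((⟨Set.univ, dense_univ⟩ : {D : Set X // Dense D}) : {D : Set X // Dense D}).1 :=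
      ciInf_le (OrderBot.bddBelow _) _
    simpa using h
  exact h1.trans (main_aux X hX)

end
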